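/- The number of labeled trees on p ≥ 2 vertices is p^{p-2}. -/

import Mathlib

set_option linter.unusedSectionVars false

namespace CayleyAux

open SimpleGraph

variable {V' V : Type}


open SimpleGraph

variable {V' V : Type}

def mapHom (f : V' ↪ V) (G' : SimpleGraph V') : G' →g G'.map f :=
  ⟨f, fun h => (SimpleGraph.map_adj_apply).mpr h⟩

lemma exists_walk_pullback (f : V' ↪ V) (G' : SimpleGraph V')
    {a b : V} (p : (G'.map f).Walk a b) : ∀ {u v : V'} (hu : f u = a) (hv : f v = b),
    ∃ q : G'.Walk u v, q.map (mapHom f G') = p.copy hu.symm hv.symm := by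
  induction p with
  | nil =>
    rintro u v hu hv
    rw [← hv] at hu
    obtain rfl : u = v := f.injective hu
    subst hv
    exact ⟨.nil, rfl⟩
  | @cons a b c h p ih =>
    rintro u v hu hv
    subst hu hv
    obtain ⟨x, y, hxy, hx, hy⟩ := (SimpleGraph.map_adj ..).mp h
    obtain rfl : x = u := f.injective hx
    obtain ⟨q, hq⟩ := ih hy rfl
    refine ⟨.cons hxy q, ?_⟩
    subst hy
    rw [Walk.copy_rfl_rfl] at hq
    rw [Walk.copy_rfl_rfl]
    simp only [Walk.map_cons, hq]
    rfl

lemma isAcyclic_map (f : V' ↪ V) {G' : SimpleGraph V'} (h : G'.IsAcyclic) :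
    (G'.map f).IsAcyclic := by
  intro v c hc
  cases c with
  | nil => exact hc.not_of_nil
  | cons hadj p =>
    obtain ⟨x, y, hxy, hx, hy⟩ := (SimpleGraph.map_adj ..).mp hadj
    subst hx
    obtain ⟨q, hq⟩ := exists_walk_pullback f G' (Walk.cons hadj p) rfl rfl
    rw [Walk.copy_rfl_rfl] at hq
    rw [← hq] at hc
    exact h q ((Walk.map_isCycle_iff_of_injective f.injective).mp hc)

lemma reachable_map_iff (f : V' ↪ V) {G' : SimpleGraph V'} {u v : V'} :
    (G'.map f).Reachable (f u) (f v) ↔ G'.Reachable u v := by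
  constructor
  · rintro ⟨p⟩
    obtain ⟨q, -⟩ := exists_walk_pullback f G' p rfl rfl
    exact ⟨q⟩
  · exact fun h => h.map (mapHom f G')



section AddLeaf

variable (l a : V)

/-- vertex set minus `l` -/
abbrev Vx (l : V) : Type := {x : V // x ≠ l}

def emb (l : V) : Vx l ↪ V := Function.Embedding.subtype _

@[simp] lemma emb_apply (x : Vx l) : emb l x = ↑x := rfl

def addLeaf (G' : SimpleGraph (Vx l)) : SimpleGraph V :=
  G'.map (emb l) ⊔ fromEdgeSet {s(l, a)}

variable {l a}

lemma not_map_adj_l (G' : SimpleGraph (Vx l)) (y : V) : ¬ (G'.map (emb l)).Adj l y := by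
  rintro ⟨-, x', y', -, hx, -⟩
  exact x'.2 hx

lemma addLeaf_adj (ha : a ≠ l) (G' : SimpleGraph (Vx l)) {x y : V} :
    (addLeaf l a G').Adj x y ↔
    (∃ x' y' : Vx l, G'.Adj x' y' ∧ ↑x' = x ∧ ↑y' = y) ∨ (x = l ∧ y = a) ∨ (x = a ∧ y = l) := by
  simp only [addLeaf, sup_adj, fromEdgeSet_adj, Set.mem_singleton_iff, Sym2.eq_iff, map_adj,
    emb_apply]
  constructor
  · rintro (h | ⟨(⟨rfl, rfl⟩ | ⟨rfl, rfl⟩), hne⟩)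
    · exact Or.inl h
    · exact Or.inr (Or.inl ⟨rfl, rfl⟩)
    · exact Or.inr (Or.inr ⟨rfl, rfl⟩)
  · rintro (h | ⟨rfl, rfl⟩ | ⟨rfl, rfl⟩)
    · exact Or.inl h
    · exact Or.inr ⟨Or.inl ⟨rfl, rfl⟩, ha.symm⟩
    · exact Or.inr ⟨Or.inr ⟨rfl, rfl⟩, ha⟩

lemma addLeaf_adj_l (ha : a ≠ l) (G' : SimpleGraph (Vx l)) {y : V} :
    (addLeaf l a G').Adj l y ↔ y = a := by
  rw [addLeaf_adj ha]
  constructor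
  · rintro (⟨x', y', -, hx, -⟩ | ⟨-, rfl⟩ | ⟨rfl, -⟩)
    · exact absurd hx x'.2
    · rfl
    · exact absurd rfl ha
  · rintro rfl
    exact Or.inr (Or.inl ⟨rfl, rfl⟩)

lemma addLeaf_adj_ne (ha : a ≠ l) (G' : SimpleGraph (Vx l)) {x y : Vx l} :
    (addLeaf l a G').Adj ↑x ↑y ↔ G'.Adj x y := by
  rw [addLeaf_adj ha]
  constructor
  · rintro (⟨x', y', h, hx, hy⟩ | ⟨hx, -⟩ | ⟨-, hy⟩)
    · obtain rfl : x' = x := Subtype.coe_injective hx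
      obtain rfl : y' = y := Subtype.coe_injective hy
      exact h
    · exact absurd hx x.2
    · exact absurd hy y.2
  · exact fun h => Or.inl ⟨x, y, h, rfl, rfl⟩

lemma neighborSet_addLeaf_l (ha : a ≠ l) (G' : SimpleGraph (Vx l)) :
    (addLeaf l a G').neighborSet l = {a} := by
  ext y; simp [mem_neighborSet, addLeaf_adj_l ha]

lemma neighborSet_addLeaf_ne (ha : a ≠ l) (G' : SimpleGraph (Vx l)) {x : Vx l}
    (hx : (x : V) ≠ a) :
    (addLeaf l a G').neighborSet ↑x = (↑) '' G'.neighborSet x := by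
  ext y
  simp only [mem_neighborSet, Set.mem_image]
  constructor
  · intro h
    have hyl : y ≠ l := by
      rintro rfl
      rw [adj_comm, addLeaf_adj_l ha] at h
      exact hx h
    refine ⟨⟨y, hyl⟩, ?_, rfl⟩
    rwa [← addLeaf_adj_ne ha G' (y := ⟨y, hyl⟩) (x := x)]
  · rintro ⟨y', hy', rfl⟩
    rwa [addLeaf_adj_ne ha]

lemma neighborSet_addLeaf_a (ha : a ≠ l) (G' : SimpleGraph (Vx l)) :
    (addLeaf l a G').neighborSet a = insert l ((↑) '' G'.neighborSet ⟨a, ha⟩) := by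
  ext y
  simp only [mem_neighborSet, Set.mem_insert_iff, Set.mem_image]
  constructor
  · intro h
    by_cases hyl : y = l
    · exact Or.inl hyl
    · refine Or.inr ⟨⟨y, hyl⟩, ?_, rfl⟩
      exact (@addLeaf_adj_ne V l a ha G' ⟨a, ha⟩ ⟨y, hyl⟩).mp h
  · rintro (h | ⟨y', hy', rfl⟩)
    · rw [h, adj_comm, addLeaf_adj_l ha]
    · exact (@addLeaf_adj_ne V l a ha G' ⟨a, ha⟩ y').mpr hy'

lemma addLeaf_isTree [DecidableEq V] (ha : a ≠ l) (G' : SimpleGraph (Vx l))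
    (hG' : G'.IsTree) : (addLeaf l a G').IsTree := by
  have hreach : ∀ x : V, (addLeaf l a G').Reachable x l := by
    intro x
    by_cases hx : x = l
    · subst hx; exact Reachable.refl _
    · have h1 : G'.Reachable ⟨x, hx⟩ ⟨a, ha⟩ := hG'.isConnected ⟨x, hx⟩ ⟨a, ha⟩
      have h2 : (G'.map (emb l)).Reachable x a := (reachable_map_iff (emb l)).mpr h1
      have h3 : (addLeaf l a G').Reachable x a := h2.mono le_sup_left
      exact h3.trans (Adj.reachable (by rw [adj_comm, addLeaf_adj_l ha]))
  haveI : Nonempty V := ⟨l⟩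
  constructor
  · exact Connected.mk fun u v => (hreach u).trans (hreach v).symm
  · -- acyclic
    intro v c hc
    have hlns : l ∉ c.support := by
      intro hl
      have hc' := hc.rotate hl
      cases hdc : c.rotate l hl with
      | nil => rw [hdc] at hc'; exact hc'.not_of_nil
      | @cons _ b _ hadj p =>
        rw [hdc] at hc'
        have hb : b = a := (addLeaf_adj_l ha G').mp hadj
        cases hpr : p.reverse with
        | nil =>
          have h0 : p.length = 0 := by
            have := congrArg Walk.length hpr
            simpa using this
          have h3 := hc'.three_le_length
          simp only [Walk.length_cons, h0] at h3
          omega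
        | @cons _ w _ hadj2 q =>
          have hw : w = a := (addLeaf_adj_l ha G').mp hadj2
          have hsup : p.support = q.support.reverse ++ [l] := by
            have h1 : p.reverse.support = l :: q.support := by
              rw [hpr, Walk.support_cons]
            rw [Walk.support_reverse] at h1
            rw [← List.reverse_reverse p.support, h1]
            simp
          have hnd : p.support.Nodup := by
            have h2 := hc'.support_nodup
            simpa [Walk.support_cons] using h2
          rw [hsup] at hnd
          have hqnd : q.support.Nodup := by
            exact List.nodup_reverse.mp (List.nodup_append.mp hnd).1
          -- q : Walk a a (it starts at a=w and ends at start of p which is a)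
          cases hq : q with
          | nil =>
            -- then p.reverse = cons hadj2 nil so p.length = 1, c length 2
            have h1 : p.length = 1 := by
              have := congrArg Walk.length hpr
              simpa [hq] using this
            have h3 := hc'.three_le_length
            simp only [Walk.length_cons, h1] at h3
            omega
          | @cons _ z _ hadj3 e =>
            have h1 : q.support = w :: e.support := by rw [hq, Walk.support_cons]
            rw [h1] at hqnd
            have hae : a ∈ e.support := by
              have h2 := e.end_mem_support
              generalize e.support = L at h2 ⊢
              rwa [hb] at h2
            refine (List.nodup_cons.mp hqnd).1 ?_
            rwa [hw]
    have hedges : ∀ e ∈ c.edges, e ∈ (G'.map (emb l)).edgeSet := by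
      intro e he
      have he' : e ∈ (addLeaf l a G').edgeSet := c.edges_subset_edgeSet he
      induction e with
      | h x y =>
        rw [mem_edgeSet, addLeaf_adj ha] at he'
        rcases he' with h | ⟨rfl, rfl⟩ | ⟨rfl, rfl⟩
        · rw [mem_edgeSet]; obtain ⟨x', y', h, hx, hy⟩ := h; exact (SimpleGraph.map_adj ..).mpr ⟨x', y', h, hx, hy⟩
        · exact absurd (Walk.fst_mem_support_of_mem_edges c he) hlns
        · exact absurd (Walk.snd_mem_support_of_mem_edges c he) hlns
    have hcyc2 : (c.transfer _ hedges).IsCycle := by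
      refine ⟨⟨?_, ?_⟩, ?_⟩
      · rw [Walk.isTrail_def, Walk.edges_transfer]
        exact hc.edges_nodup
      · intro hnil
        have hlen := Walk.length_transfer c hedges
        rw [hnil] at hlen
        have h3 := hc.three_le_length
        simp at hlen
        omega
      · rw [Walk.support_transfer]
        exact hc.support_nodup
    exact isAcyclic_map (emb l) hG'.2 (c.transfer _ hedges) hcyc2

end AddLeaf


variable {V : Type}

section Aux

variable [Fintype V]

lemma card_two_eq {x z y : V} (hcard : Fintype.card V = 2) (hz : z ≠ x) (hy : y ≠ x) : z = y := by
  by_contra hne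
  have hnd : [x, z, y].Nodup := by
    simp [hz.symm, hy.symm, hne]
  have := hnd.length_le_card
  simp [hcard] at this

lemma walk_ne_nil_adj {T : SimpleGraph V} {x y : V} (hxy : x ≠ y) (p : T.Walk x y) :
    ∃ z, T.Adj x z := by
  cases p with
  | nil => exact absurd rfl hxy
  | cons h q => exact ⟨_, h⟩

lemma top_isTree (hcard : Fintype.card V = 2) : (⊤ : SimpleGraph V).IsTree := by
  haveI : Nonempty V := Fintype.card_pos_iff.mp (by omega)
  constructor
  · exact Connected.mk fun u v => by
      by_cases h : u = v
      · exact h ▸ Reachable.refl u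
      · exact Adj.reachable (by simp [h])
  · intro v c hc
    have h3 := hc.three_le_length
    have hnd := hc.support_nodup
    have hlen : c.support.tail.length = c.length := by
      have := c.length_support
      simp [List.length_tail, this]
    have := hnd.length_le_card
    rw [hlen, hcard] at this
    omega

lemma isTree_card_two_eq_top {T : SimpleGraph V} (hcard : Fintype.card V = 2)
    (hT : T.IsTree) : T = ⊤ := by
  ext x y
  simp only [top_adj]
  constructor
  · exact fun h => h.ne
  · intro hxy
    obtain ⟨p⟩ := hT.isConnected x y
    obtain ⟨z, hz⟩ := walk_ne_nil_adj hxy p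
    have : z = y := card_two_eq hcard hz.ne' (Ne.symm hxy)
    exact this ▸ hz

lemma top_neighborSet_leaf (hcard : Fintype.card V = 2) (v : V) :
    ∃ w, (⊤ : SimpleGraph V).neighborSet v = {w} := by
  obtain ⟨w, hw⟩ := Fintype.exists_ne_of_one_lt_card (by omega) v
  refine ⟨w, ?_⟩
  ext u
  simp only [mem_neighborSet, top_adj, Set.mem_singleton_iff]
  constructor
  · intro h
    exact card_two_eq hcard (Ne.symm h) hw
  · rintro rfl
    exact hw.symm

lemma tree_exists_leaf (T : SimpleGraph V) (hT : T.IsTree) (h2 : 2 ≤ Fintype.card V) :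
    ∃ v w, T.neighborSet v = {w} := by
  classical
  by_contra hno
  push_neg at hno
  have hdeg : ∀ v, 2 ≤ T.degree v := by
    intro v
    obtain ⟨w, hw⟩ := Fintype.exists_ne_of_one_lt_card (by omega) v
    obtain ⟨p⟩ := hT.isConnected v w
    obtain ⟨z, hz⟩ := walk_ne_nil_adj (Ne.symm hw) p
    have h1 : 0 < T.degree v := T.degree_pos_iff_exists_adj v |>.mpr ⟨z, hz⟩
    rcases Nat.lt_or_ge (T.degree v) 2 with h | h
    · exfalso
      have hd1 : T.degree v = 1 := by omega
      rw [SimpleGraph.degree] at hd1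
      obtain ⟨w', hw'⟩ := Finset.card_eq_one.mp hd1
      refine hno v w' ?_
      have hadj : ∀ u, T.Adj v u ↔ u = w' := fun u => by
        rw [← SimpleGraph.mem_neighborFinset, hw', Finset.mem_singleton]
      ext u
      simp [mem_neighborSet, hadj]
    · exact h
  have hsum := T.sum_degrees_eq_twice_card_edges
  have hE := hT.card_edgeFinset
  have hge : Fintype.card V * 2 ≤ ∑ v, T.degree v := by
    have := Finset.card_nsmul_le_sum Finset.univ (fun v => T.degree v) 2 (fun v _ => hdeg v)
    simpa [smul_eq_mul, Finset.card_univ] using this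
  omega

end Aux

section Converse

variable (l a : V)

variable {l a}

/-- hom from the comap graph into `T` -/
def comapHom (T : SimpleGraph V) : T.comap (emb l) →g T :=
  ⟨emb l, fun h => h⟩

lemma comapHom_injective (T : SimpleGraph V) :
    Function.Injective (comapHom (l := l) T) := Subtype.coe_injective

lemma tree_decomp_eq (T : SimpleGraph V) (ha : a ≠ l)
    (hN : T.neighborSet l = {a}) : T = addLeaf l a (T.comap (emb l)) := by
  have hadj_la : T.Adj l a := by
    have : a ∈ T.neighborSet l := hN ▸ rfl
    exact this
  ext x y
  rw [addLeaf_adj ha]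
  constructor
  · intro h
    by_cases hx : x = l
    · subst hx
      have : y ∈ T.neighborSet x := h
      rw [hN] at this
      exact Or.inr (Or.inl ⟨rfl, this⟩)
    · by_cases hy : y = l
      · subst hy
        have : x ∈ T.neighborSet y := h.symm
        rw [hN] at this
        exact Or.inr (Or.inr ⟨this, rfl⟩)
      · exact Or.inl ⟨⟨x, hx⟩, ⟨y, hy⟩, h, rfl, rfl⟩
  · rintro (⟨x', y', h, rfl, rfl⟩ | ⟨rfl, rfl⟩ | ⟨rfl, rfl⟩)
    · exact h
    · exact hadj_la
    · exact hadj_la.symm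

lemma not_mem_path_support [DecidableEq V] {T : SimpleGraph V} (hN : T.neighborSet l = {a})
    {x y : V} (hx : x ≠ l) (hy : y ≠ l) (p : T.Walk x y) (hp : p.IsPath) :
    l ∉ p.support := by
  intro hl
  set p1 := p.takeUntil l hl with hp1
  set p2 := p.dropUntil l hl with hp2
  have hspec := p.take_spec hl
  have hp1path : p1.IsPath := hp.takeUntil hl
  have hp2path : p2.IsPath := hp.dropUntil hl
  -- p2 : Walk l y, y ≠ l so nonnil; first step goes to a
  have ha2 : a ∈ p2.support.tail := by
    cases hc : p2 with
    | nil =>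
      exact absurd rfl hy
    | @cons _ z _ h q =>
      have hz : z = a := by
        have : z ∈ T.neighborSet l := h
        rwa [hN] at this
      rw [Walk.support_cons]
      simp only [List.tail_cons]
      rw [← hz]
      exact q.start_mem_support
  -- p1.reverse : Walk l x, nonnil, first step to a, so a ∈ p1.support
  have ha1 : a ∈ p1.support := by
    have h1 : l ∈ p1.support := p1.end_mem_support
    cases hc : p1.reverse with
    | nil =>
      exact absurd rfl hx
    | @cons _ z _ h q =>
      have hz : z = a := by
        have : z ∈ T.neighborSet l := h
        rwa [hN] at this
      have : a ∈ p1.reverse.support := by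
        rw [hc, Walk.support_cons]
        right
        rw [← hz]
        exact q.start_mem_support
      rwa [Walk.support_reverse, List.mem_reverse] at this
  -- contradiction with nodup
  have hnd : (p1.append p2).support.Nodup := by rw [hspec]; exact hp.support_nodup
  rw [Walk.support_append] at hnd
  exact (List.disjoint_of_nodup_append hnd) ha1 ha2

lemma tree_decomp_isTree [Fintype V] [DecidableEq V] (T : SimpleGraph V) (ha : a ≠ l)
    (hT : T.IsTree) (hN : T.neighborSet l = {a}) (hcard : 3 ≤ Fintype.card V) :
    (T.comap (emb l)).IsTree := by
  obtain ⟨w, hw⟩ := Fintype.exists_ne_of_one_lt_card (by omega : 1 < Fintype.card V) l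
  haveI : Nonempty (Vx l) := ⟨⟨w, hw⟩⟩
  constructor
  · -- connected
    refine Connected.mk ?_
    intro x y
    obtain ⟨p⟩ := hT.isConnected ↑x ↑y
    replace p := p.toPath
    obtain ⟨p, hp⟩ := p
    have hlns : l ∉ p.support := not_mem_path_support hN x.2 y.2 p hp
    have hedges : ∀ e ∈ p.edges, e ∈ ((T.comap (emb l)).map (emb l)).edgeSet := by
      intro e he
      have he' : e ∈ T.edgeSet := p.edges_subset_edgeSet he
      induction e with
      | h u w =>
        have hu : u ≠ l := fun h => hlns (h ▸ Walk.fst_mem_support_of_mem_edges p he)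
        have hw : w ≠ l := fun h => hlns (h ▸ Walk.snd_mem_support_of_mem_edges p he)
        rw [mem_edgeSet] at he' ⊢
        exact (SimpleGraph.map_adj ..).mpr ⟨⟨u, hu⟩, ⟨w, hw⟩, he', rfl, rfl⟩
    obtain ⟨q, -⟩ := exists_walk_pullback (emb l) (T.comap (emb l))
      (p.transfer _ hedges) (u := x) (v := y) rfl rfl
    exact ⟨q⟩
  · -- acyclic
    intro v c hc
    have : (c.map (comapHom T)).IsCycle :=
      (Walk.map_isCycle_iff_of_injective (comapHom_injective T)).mpr hc
    exact hT.IsAcyclic _ this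

end Converse


section Decode

variable {V : Type} [Fintype V] [LinearOrder V]

def restrictList (l : V) (s : List V) (hl : l ∉ s) : List (Vx l) :=
  s.attach.map fun x => ⟨x.1, fun h => hl (h ▸ x.2)⟩

@[simp] lemma restrictList_map_coe (l : V) (s : List V) (hl : l ∉ s) :
    (restrictList l s hl).map Subtype.val = s := by
  simp [restrictList, List.map_map, Function.comp_def, List.attach_map_subtype_val]

@[simp] lemma restrictList_length (l : V) (s : List V) (hl : l ∉ s) :
    (restrictList l s hl).length = s.length := by
  simp [restrictList]

lemma mem_restrictList {l : V} {s : List V} {hl : l ∉ s} {x : Vx l} :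
    x ∈ restrictList l s hl ↔ (x : V) ∈ s := by
  constructor
  · intro hx
    simp only [restrictList, List.mem_map, List.mem_attach] at hx
    obtain ⟨y, -, rfl⟩ := hx
    exact y.2
  · intro hx
    simp only [restrictList, List.mem_map]
    exact ⟨⟨(x : V), hx⟩, List.mem_attach _ _, Subtype.ext rfl⟩

lemma restrictList_coe (l : V) (s' : List (Vx l)) (hl : l ∉ s'.map Subtype.val) :
    restrictList l (s'.map Subtype.val) hl = s' := by
  apply List.map_injective_iff.mpr Subtype.coe_injective
  rw [restrictList_map_coe]

lemma min'_compl_not_mem (a : V) (s : List V)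
    (h : ((insert a s.toFinset)ᶜ : Finset V).Nonempty) :
    (insert a s.toFinset)ᶜ.min' h ∉ s := by
  have := Finset.min'_mem _ h
  simp only [Finset.mem_compl, Finset.mem_insert, List.mem_toFinset, not_or] at this
  exact this.2

lemma min'_compl_ne (a : V) (s : List V)
    (h : ((insert a s.toFinset)ᶜ : Finset V).Nonempty) :
    a ≠ (insert a s.toFinset)ᶜ.min' h := by
  have := Finset.min'_mem _ h
  simp only [Finset.mem_compl, Finset.mem_insert, List.mem_toFinset, not_or] at this
  exact fun he => this.1 he.symm

end Decode

def decode : {V : Type} → [inst1 : Fintype V] → [inst2 : LinearOrder V] → List V → SimpleGraph V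
  | _, _, _, [] => ⊤
  | V, _, _, a :: s =>
    if h : ((insert a s.toFinset)ᶜ : Finset V).Nonempty then
      addLeaf ((insert a s.toFinset)ᶜ.min' h) a
        (decode (restrictList _ s (min'_compl_not_mem a s h)))
    else ⊥
termination_by V _ _ s => s.length
decreasing_by simp [restrictList]

@[simp] lemma decode_nil {V : Type} [Fintype V] [LinearOrder V] :
    (decode ([] : List V)) = ⊤ := by rw [decode]

lemma decode_cons {V : Type} [Fintype V] [LinearOrder V] (a : V) (s : List V)
    (h : ((insert a s.toFinset)ᶜ : Finset V).Nonempty) :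
    decode (a :: s) = addLeaf ((insert a s.toFinset)ᶜ.min' h) a
        (decode (restrictList _ s (min'_compl_not_mem a s h))) := by
  rw [decode]
  rw [dif_pos h]

section Master
variable [Fintype V] [LinearOrder V]

lemma decode_cons' (a : V) (s : List V)
    (h : ((insert a s.toFinset)ᶜ : Finset V).Nonempty) (l : V)
    (hl : (insert a s.toFinset)ᶜ.min' h = l) (hls : l ∉ s) :
    decode (a :: s) = addLeaf l a (decode (restrictList l s hls)) := by
  subst hl
  rw [decode_cons a s h]

lemma comap_addLeaf {l a : V} (ha : a ≠ l) (G' : SimpleGraph (Vx l)) :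
    (addLeaf l a G').comap (emb l) = G' := by
  ext x y
  rw [comap_adj]
  exact addLeaf_adj_ne ha G'

lemma addLeaf_cancel {l a b : V} (ha : a ≠ l) (hb : b ≠ l)
    {G₁ G₂ : SimpleGraph (Vx l)} (h : addLeaf l a G₁ = addLeaf l b G₂) :
    a = b ∧ G₁ = G₂ := by
  constructor
  · have h1 := neighborSet_addLeaf_l ha G₁
    rw [h, neighborSet_addLeaf_l hb G₂] at h1
    exact (Set.singleton_eq_singleton_iff.mp h1).symm
  · rw [← comap_addLeaf ha G₁, h, comap_addLeaf hb G₂]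

lemma key_nonempty {n : ℕ} (hcard : Fintype.card V = n + 3) (a : V) (s0 : List V)
    (hs : s0.length = n) : ((insert a s0.toFinset)ᶜ : Finset V).Nonempty := by
  rw [← Finset.card_pos, Finset.card_compl]
  have h1 : (insert a s0.toFinset).card ≤ n + 1 := by
    calc (insert a s0.toFinset).card ≤ s0.toFinset.card + 1 := Finset.card_insert_le _ _
    _ ≤ s0.length + 1 := by have := s0.toFinset_card_le; omega
    _ = n + 1 := by omega
  omega

lemma card_Vx (l : V) : Fintype.card (Vx l) = Fintype.card V - 1 := by
  rw [Fintype.card_subtype_compl, Fintype.card_subtype_eq]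

theorem master (n : ℕ) : ∀ (V : Type) [Fintype V] [LinearOrder V], Fintype.card V = n + 2 →
    (∀ s : List V, s.length = n →
      (decode s).IsTree ∧ (∀ v : V, (∃ w, (decode s).neighborSet v = {w}) ↔ v ∉ s)) ∧
    (∀ s t : List V, s.length = n → t.length = n → decode s = decode t → s = t) ∧
    (∀ T : SimpleGraph V, T.IsTree → ∃ s : List V, s.length = n ∧ decode s = T) := by
  induction n with
  | zero =>
    intro V _ _ hcard
    refine ⟨?_, ?_, ?_⟩
    · intro s hs
      obtain rfl : s = [] := List.length_eq_zero_iff.mp hs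
      rw [decode_nil]
      refine ⟨top_isTree hcard, fun v => ?_⟩
      simp only [List.not_mem_nil, not_false_iff, iff_true]
      exact top_neighborSet_leaf hcard v
    · intro s t hs ht _
      rw [List.length_eq_zero_iff.mp hs, List.length_eq_zero_iff.mp ht]
    · intro T hT
      exact ⟨[], rfl, by rw [decode_nil, isTree_card_two_eq_top hcard hT]⟩
  | succ n ih =>
    intro V _ _ hcard
    rw [(by omega : n + 1 + 2 = n + 3)] at hcard
    have hcardVx : ∀ l : V, Fintype.card (Vx l) = n + 2 := by
      intro l; rw [card_Vx, hcard]; omega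
    -- Part 1: tree + leaf invariant
    have hstep : ∀ s : List V, s.length = n + 1 →
        (decode s).IsTree ∧ (∀ v : V, (∃ w, (decode s).neighborSet v = {w}) ↔ v ∉ s) := by
      intro s hs
      cases s with
      | nil => simp at hs
      | cons a s0 =>
        have hs0 : s0.length = n := by simpa using hs
        have hne := key_nonempty hcard a s0 hs0
        obtain ⟨l, hgl⟩ : ∃ x, (insert a s0.toFinset)ᶜ.min' hne = x := ⟨_, rfl⟩
        have hls0 : l ∉ s0 := hgl ▸ min'_compl_not_mem a s0 hne
        have haL : a ≠ l := hgl ▸ min'_compl_ne a s0 hne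
        have hlins : l ∉ insert a s0.toFinset := by
          have := Finset.min'_mem _ hne
          rwa [hgl, Finset.mem_compl] at this
        rw [decode_cons' a s0 hne l hgl hls0]
        set G' : SimpleGraph (Vx l) := decode (restrictList l s0 hls0) with hG'
        obtain ⟨htree', hinv'⟩ := (ih (Vx l) (hcardVx l)).1 (restrictList l s0 hls0)
          ((restrictList_length l s0 hls0).trans hs0)
        refine ⟨addLeaf_isTree haL G' htree', fun v => ?_⟩
        by_cases hvL : v = l
        · subst hvL
          simp only [List.mem_cons, not_or]
          refine iff_of_true ⟨a, neighborSet_addLeaf_l haL G'⟩ ⟨fun h => ?_, fun h => ?_⟩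
          · exact hlins (by rw [h]; exact Finset.mem_insert_self a _)
          · exact hlins (Finset.mem_insert_of_mem (List.mem_toFinset.mpr h))
        · by_cases hva : v = a
          · subst hva
            refine iff_of_false ?_ (by simp)
            rintro ⟨w, hw⟩
            rw [neighborSet_addLeaf_a haL G'] at hw
            have hlw : l = w := by
              have : l ∈ ({w} : Set V) := hw ▸ Set.mem_insert l _
              exact this
            -- G' has a neighbor of ⟨v, hvL⟩... of ⟨a⟩
            haveI : Nonempty (Vx l) := ⟨⟨v, hvL⟩⟩
            obtain ⟨z, hz⟩ := Fintype.exists_ne_of_one_lt_card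
              (by rw [hcardVx l]; omega) (⟨v, hvL⟩ : Vx l)
            obtain ⟨p⟩ := htree'.isConnected ⟨v, hvL⟩ z
            obtain ⟨z', hz'⟩ := walk_ne_nil_adj (Ne.symm hz) p
            have himg : (z' : V) ∈ (Subtype.val : Vx l → V) '' G'.neighborSet ⟨v, hvL⟩ :=
              ⟨z', hz', rfl⟩
            have hmem2 : (z' : V) ∈ ({w} : Set V) := by
              rw [← hw]
              exact Set.mem_insert_of_mem _ himg
            have hzw : (z' : V) = w := hmem2
            exact z'.2 (hzw.trans hlw.symm)
          · set x : Vx l := ⟨v, hvL⟩ with hx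
            have hxa : (x : V) ≠ a := hva
            rw [neighborSet_addLeaf_ne haL G' hxa]
            have e1 : (∃ w, (Subtype.val : Vx l → V) '' G'.neighborSet x = {w}) ↔
                ∃ w', G'.neighborSet x = {w'} := by
              constructor
              · rintro ⟨w, hw⟩
                have hwmem : w ∈ (Subtype.val : Vx l → V) '' G'.neighborSet x := hw ▸ rfl
                obtain ⟨w', hw', hww'⟩ := hwmem
                refine ⟨w', Set.image_injective.mpr Subtype.coe_injective ?_⟩
                rw [hw, Set.image_singleton, hww']
              · rintro ⟨w', hw'⟩
                exact ⟨↑w', by rw [hw', Set.image_singleton]⟩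
            rw [e1, hinv' x, mem_restrictList]
            simp only [List.mem_cons, not_or]
            constructor
            · exact fun h => ⟨hva, h⟩
            · exact fun h => h.2
    refine ⟨hstep, ?_, ?_⟩
    · -- injectivity
      intro s t hs ht heq
      cases s with
      | nil => simp at hs
      | cons a s0 =>
        cases t with
        | nil => simp at ht
        | cons b t0 =>
          have hs0 : s0.length = n := by simpa using hs
          have ht0 : t0.length = n := by simpa using ht
          have hneS := key_nonempty hcard a s0 hs0
          have hneT := key_nonempty hcard b t0 ht0
          have hmem : ∀ v : V, v ∈ a :: s0 ↔ v ∈ b :: t0 := by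
            intro v
            rw [← not_iff_not, ← (hstep (a :: s0) hs).2 v, ← (hstep (b :: t0) ht).2 v, heq]
          have hIns : insert a s0.toFinset = insert b t0.toFinset := by
            ext v
            have := hmem v
            simp only [List.mem_cons] at this
            simp [Finset.mem_insert, List.mem_toFinset, this]
          obtain ⟨l, hgl⟩ : ∃ x, (insert a s0.toFinset)ᶜ.min' hneS = x := ⟨_, rfl⟩
          have hgl2 : (insert b t0.toFinset)ᶜ.min' hneT = l := by
            rw [← hgl]
            simp only [hIns]
          have hls0 : l ∉ s0 := hgl ▸ min'_compl_not_mem a s0 hneS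
          have hlt0 : l ∉ t0 := hgl2 ▸ min'_compl_not_mem b t0 hneT
          have haL : a ≠ l := hgl ▸ min'_compl_ne a s0 hneS
          have hbL : b ≠ l := hgl2 ▸ min'_compl_ne b t0 hneT
          rw [decode_cons' a s0 hneS l hgl hls0, decode_cons' b t0 hneT l hgl2 hlt0] at heq
          obtain ⟨rfl, hG⟩ := addLeaf_cancel haL hbL heq
          have := (ih (Vx l) (hcardVx l)).2.1 (restrictList l s0 hls0) (restrictList l t0 hlt0)
            ((restrictList_length l s0 hls0).trans hs0)
            ((restrictList_length l t0 hlt0).trans ht0) hG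
          have h2 := congrArg (List.map (Subtype.val : Vx l → V)) this
          rw [restrictList_map_coe, restrictList_map_coe] at h2
          rw [h2]
    · -- surjectivity
      intro T hT
      classical
      have hleaf := tree_exists_leaf T hT (by omega)
      set leafset : Finset V := Finset.univ.filter (fun v => ∃ w, T.neighborSet v = {w})
        with hleafset
      have hlne : leafset.Nonempty := by
        obtain ⟨v, w, hw⟩ := hleaf
        exact ⟨v, by simp [hleafset, hw]⟩
      obtain ⟨l, hl1, hl2⟩ : ∃ l, l ∈ leafset ∧ ∀ v ∈ leafset, l ≤ v :=
        ⟨leafset.min' hlne, leafset.min'_mem hlne, fun v hv => leafset.min'_le v hv⟩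
      obtain ⟨a₀, hN⟩ : ∃ w, T.neighborSet l = {w} := by
        simpa [hleafset] using hl1
      have hadj_la : T.Adj l a₀ := by rw [← SimpleGraph.mem_neighborSet, hN]; rfl
      have ha : a₀ ≠ l := hadj_la.ne'
      have hT' : (T.comap (emb l)).IsTree :=
        tree_decomp_isTree T ha hT hN (by omega)
      obtain ⟨s', hs'len, hs'dec⟩ := (ih (Vx l) (hcardVx l)).2.2 (T.comap (emb l)) hT'
      refine ⟨a₀ :: s'.map Subtype.val, by simp [hs'len], ?_⟩
      have hlnotmem : l ∉ s'.map Subtype.val := by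
        intro h
        obtain ⟨x, -, hx⟩ := List.mem_map.mp h
        exact x.2 hx
      have hne2 : ((insert a₀ (s'.map Subtype.val).toFinset)ᶜ : Finset V).Nonempty := by
        refine ⟨l, ?_⟩
        simp only [Finset.mem_compl, Finset.mem_insert, List.mem_toFinset, not_or]
        exact ⟨Ne.symm ha, hlnotmem⟩
      have hmin : (insert a₀ (s'.map Subtype.val).toFinset)ᶜ.min' hne2 = l := by
        apply le_antisymm
        · apply Finset.min'_le
          simp only [Finset.mem_compl, Finset.mem_insert, List.mem_toFinset, not_or]
          exact ⟨Ne.symm ha, hlnotmem⟩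
        · set m := (insert a₀ (s'.map Subtype.val).toFinset)ᶜ.min' hne2 with hm
          have hmmem := Finset.min'_mem _ hne2
          rw [← hm] at hmmem
          simp only [Finset.mem_compl, Finset.mem_insert, List.mem_toFinset, not_or] at hmmem
          obtain ⟨hma, hms⟩ := hmmem
          by_cases hml : m = l
          · exact le_of_eq hml.symm
          · -- m is a leaf of T
            apply hl2
            have hxs' : (⟨m, hml⟩ : Vx l) ∉ s' := by
              intro hmem
              exact hms (List.mem_map.mpr ⟨_, hmem, rfl⟩)
            have hinv := ((ih (Vx l) (hcardVx l)).1 s' hs'len).2 (⟨m, hml⟩ : Vx l)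
            obtain ⟨w', hw'⟩ := hinv.mpr hxs'
            rw [hs'dec] at hw'
            have h5 : (addLeaf l a₀ (T.comap (emb l))).neighborSet m
                = (Subtype.val : Vx l → V) '' (T.comap (emb l)).neighborSet ⟨m, hml⟩ := by
              exact neighborSet_addLeaf_ne ha (T.comap (emb l)) (x := ⟨m, hml⟩) hma
            simp only [hleafset, Finset.mem_filter, Finset.mem_univ, true_and]
            refine ⟨↑w', ?_⟩
            conv_lhs => rw [tree_decomp_eq T ha hN]
            rw [h5, hw', Set.image_singleton]
      have hls2 : l ∉ (s'.map Subtype.val) := hlnotmem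
      rw [decode_cons' a₀ (s'.map Subtype.val) hne2 l hmin hls2]
      rw [restrictList_coe l s' hls2, hs'dec]
      exact (tree_decomp_eq T ha hN).symm

end Master

end CayleyAux

/-- Cayley's formula: there are p^(p-2) labeled trees on p ≥ 2 vertices. -/
theorem cayley_formula (p : ℕ) (hp : 2 ≤ p) :
    Nat.card {G : SimpleGraph (Fin p) // G.IsTree} = p ^ (p - 2) := by
  obtain ⟨n, rfl⟩ : ∃ n, p = n + 2 := ⟨p - 2, by omega⟩
  have hcard : Fintype.card (Fin (n + 2)) = n + 2 := Fintype.card_fin _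
  obtain ⟨hdec, hinj, hsurj⟩ := CayleyAux.master n (Fin (n + 2)) hcard
  have hbij : Function.Bijective
      (fun s : {s : List (Fin (n + 2)) // s.length = n} =>
        (⟨CayleyAux.decode s.1, (hdec s.1 s.2).1⟩ : {G : SimpleGraph (Fin (n + 2)) // G.IsTree})) := by
    constructor
    · rintro ⟨s, hs⟩ ⟨t, ht⟩ h
      simp only [Subtype.mk.injEq] at h
      exact Subtype.ext (hinj s t hs ht h)
    · rintro ⟨T, hT⟩
      obtain ⟨s, hs, hsd⟩ := hsurj T hT
      exact ⟨⟨s, hs⟩, Subtype.ext hsd⟩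
  have h1 : Nat.card {G : SimpleGraph (Fin (n + 2)) // G.IsTree}
      = Nat.card {s : List (Fin (n + 2)) // s.length = n} :=
    (Nat.card_eq_of_bijective _ hbij).symm
  have h2 : Nat.card {s : List (Fin (n + 2)) // s.length = n}
      = Nat.card (Fin n → Fin (n + 2)) := by
    refine Nat.card_congr ?_
    exact (Equiv.vectorEquivFin (Fin (n + 2)) n : List.Vector (Fin (n + 2)) n ≃ _)
  rw [h1, h2, Nat.card_eq_fintype_card, Fintype.card_fun]
  simp
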